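/- Let g be a finite-dimensional Lie algebra over an algebraically closed field K of characteristic p > 0. Then every simple module over the universal enveloping algebra U(g) is finite-dimensional as a K-vector space. -/

import Mathlib

/-!
Auxiliary material for the proof that over an algebraically closed field of
characteristic `p > 0`, every simple module over the universal enveloping algebra
of a finite-dimensional Lie algebra is finite-dimensional.
-/

attribute [local instance] LieRing.ofAssociativeRing

namespace UEAAux

open UniversalEnvelopingAlgebra

variable {α : Type*} [LinearOrder α]

/-- Number of inversions of a list. -/
def invCount : List α → ℕ
  | [] => 0
  | a :: t => t.countP (fun b => decide (b < a)) + invCount t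

lemma invCount_swap (u : List α) (a b : α) (v : List α) (hba : b < a) :
    invCount (u ++ a :: b :: v) = invCount (u ++ b :: a :: v) + 1 := by
  induction u with
  | nil =>
      simp only [List.nil_append, invCount, List.countP_cons]
      have h1 : (decide (b < a)) = true := by simpa using hba
      have h2 : (decide (a < b)) = false := by simpa using not_lt.mpr hba.le
      simp [h1, h2]
      omega
  | cons c u ih =>
      have hperm : (u ++ a :: b :: v).Perm (u ++ b :: a :: v) :=
        List.Perm.append_left u (List.Perm.swap b a v)
      show List.countP _ (u ++ a :: b :: v) + invCount (u ++ a :: b :: v) =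
        List.countP _ (u ++ b :: a :: v) + invCount (u ++ b :: a :: v) + 1
      rw [hperm.countP_eq, ih]
      ring

lemma exists_desc : ∀ {l : List α}, ¬ l.Chain' (· ≤ ·) →
    ∃ u a b v, l = u ++ a :: b :: v ∧ b < a
  | [], h => absurd List.isChain_nil h
  | [a], h => absurd (List.isChain_singleton a) h
  | a :: b :: t, h => by
      unfold List.Chain' at h
      rw [List.isChain_cons_cons] at h
      push_neg at h
      by_cases hab : a ≤ b
      · obtain ⟨u, a', b', v, h1, h2⟩ := exists_desc (h hab)
        exact ⟨a :: u, a', b', v, by rw [h1]; rfl, h2⟩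
      · exact ⟨[], a, b, t, rfl, lt_of_not_ge hab⟩

lemma sorted_extract [DecidableEq α] {l : List α} (hs : l.Chain' (· ≤ ·)) (a : α) {n : ℕ}
    (hn : n ≤ l.count a) : ∃ u v, l = u ++ List.replicate n a ++ v := by
  have hsort : l.Pairwise (· ≤ ·) := List.isChain_iff_pairwise.mp hs
  set m := l.count a with hm
  set u := l.filter (fun b => decide (b < a)) with hu
  set v := l.filter (fun b => decide (a < b)) with hv
  have hperm : l.Perm (u ++ (List.replicate m a ++ v)) := by
    rw [List.perm_iff_count]
    intro x
    rcases lt_trichotomy x a with hx | hx | hx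
    · have h1 : x ∈ (List.replicate m a) → False := fun hmem => by
        rw [List.eq_of_mem_replicate hmem] at hx; exact lt_irrefl a hx
      have h2 : x ∉ v := by
        intro hmem
        rw [hv, List.mem_filter] at hmem
        exact absurd (of_decide_eq_true hmem.2) (not_lt.mpr hx.le)
      rw [List.count_append, List.count_append,
        List.count_eq_zero.mpr (fun h => h1 h), List.count_eq_zero.mpr h2,
        hu, List.count_filter (by simpa using hx)]
      omega
    · subst hx
      have h1 : x ∉ u := by
        intro hmem
        rw [hu, List.mem_filter] at hmem
        exact absurd (of_decide_eq_true hmem.2) (lt_irrefl x)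
      have h2 : x ∉ v := by
        intro hmem
        rw [hv, List.mem_filter] at hmem
        exact absurd (of_decide_eq_true hmem.2) (lt_irrefl x)
      rw [List.count_append, List.count_append, List.count_eq_zero.mpr h1,
        List.count_eq_zero.mpr h2, List.count_replicate_self]
      omega
    · have h1 : x ∈ (List.replicate m a) → False := fun hmem => by
        rw [List.eq_of_mem_replicate hmem] at hx; exact lt_irrefl a hx
      have h2 : x ∉ u := by
        intro hmem
        rw [hu, List.mem_filter] at hmem
        exact absurd (of_decide_eq_true hmem.2) (not_lt.mpr hx.le)
      rw [List.count_append, List.count_append,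
        List.count_eq_zero.mpr (fun h => h1 h), List.count_eq_zero.mpr h2,
        hv, List.count_filter (by simpa using hx)]
      omega
  have hmem_u : ∀ x ∈ u, x < a := by
    intro x hx; rw [hu, List.mem_filter] at hx; exact of_decide_eq_true hx.2
  have hmem_v : ∀ x ∈ v, a < x := by
    intro x hx; rw [hv, List.mem_filter] at hx; exact of_decide_eq_true hx.2
  have hsort2 : (u ++ (List.replicate m a ++ v)).Pairwise (· ≤ ·) := by
    rw [List.pairwise_append]
    refine ⟨hsort.filter _, ?_, ?_⟩
    · rw [List.pairwise_append]
      refine ⟨List.pairwise_replicate.mpr (Or.inr le_rfl), hsort.filter _, ?_⟩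
      intro x hx y hy
      rw [List.eq_of_mem_replicate hx]
      exact (hmem_v y hy).le
    · intro x hx y hy
      rcases List.mem_append.mp hy with hy | hy
      · rw [List.eq_of_mem_replicate hy]; exact (hmem_u x hx).le
      · exact ((hmem_u x hx).trans (hmem_v y hy)).le
  have heq : l = u ++ (List.replicate m a ++ v) :=
    List.Perm.eq_of_pairwise' hsort hsort2 hperm
  refine ⟨u, List.replicate (m - n) a ++ v, ?_⟩
  have hrep : List.replicate m a = List.replicate n a ++ List.replicate (m - n) a := by
    rw [← List.replicate_add]; congr 1; omega
  rw [heq, hrep]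
  simp only [List.append_assoc]

lemma length_eq_sum_count [DecidableEq α] [Fintype α] (l : List α) :
    l.length = ∑ a : α, l.count a := by
  induction l with
  | nil => simp
  | cons c t ih =>
      simp only [List.length_cons, List.count_cons, ih]
      rw [Finset.sum_add_distrib]
      simp


lemma uea_nontrivial (K : Type*) [Field K] (L : Type*) [LieRing L] [LieAlgebra K L] :
    Nontrivial (UniversalEnvelopingAlgebra K L) := by
  let ε : UniversalEnvelopingAlgebra K L →ₐ[K] K :=
    UniversalEnvelopingAlgebra.lift K (0 : L →ₗ⁅K⁆ K)
  refine ⟨1, 0, fun h => ?_⟩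
  have := congrArg ε h
  simp only [map_one, map_zero] at this
  exact one_ne_zero this

lemma adjoin_range_ι_eq_top (K : Type*) [Field K] (L : Type*) [LieRing L] [LieAlgebra K L] :
    Algebra.adjoin K (Set.range (ι K : L → UniversalEnvelopingAlgebra K L)) = ⊤ := by
  rw [eq_top_iff]
  rintro u -
  obtain ⟨t, rfl⟩ := RingCon.mkₐ_surjective (α := K) (ringCon K L) u
  show mkAlgHom K L t ∈ _
  induction t using TensorAlgebra.induction with
  | algebraMap r => rw [AlgHom.commutes]; exact Subalgebra.algebraMap_mem _ r
  | ι x => exact Algebra.subset_adjoin ⟨x, rfl⟩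
  | mul a b ha hb => rw [map_mul]; exact mul_mem ha hb
  | add a b ha hb => rw [map_add]; exact add_mem ha hb

lemma exists_central_pPow
    (K : Type*) [Field K] (p : ℕ) [Fact p.Prime] [CharP K p]
    (L : Type*) [LieRing L] [LieAlgebra K L] [Module.Finite K L] (x : L) :
    ∃ (q : ℕ) (z : UniversalEnvelopingAlgebra K L), 0 < q ∧
      (∀ u, z * u = u * z) ∧
      (ι K x : UniversalEnvelopingAlgebra K L) ^ q - z ∈
        Submodule.span K (Set.range fun j : Fin q =>
          (ι K x : UniversalEnvelopingAlgebra K L) ^ (j : ℕ)) := by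
  set U := UniversalEnvelopingAlgebra K L with hU
  haveI : Nontrivial U := uea_nontrivial K L
  have hp1 : 1 < p := (Fact.out : p.Prime).one_lt
  -- char p in endomorphisms of U
  have hinj : Function.Injective (algebraMap K (Module.End K U)) := by
    intro k k' h
    have h1 := congrArg (fun f : Module.End K U => f 1) h
    simp only [Module.algebraMap_end_apply] at h1
    rw [← Algebra.algebraMap_eq_smul_one (A := U), ← Algebra.algebraMap_eq_smul_one (A := U)]
      at h1
    exact (algebraMap K U).injective h1
  haveI : CharP (Module.End K U) p := charP_of_injective_algebraMap hinj p
  -- the adjoint operator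
  let adU : U →ₗ[K] Module.End K U := LinearMap.mul K U - (LinearMap.mul K U).flip
  have hadU : ∀ a b : U, adU a b = a * b - b * a := fun a b => rfl
  have hadU_eq : ∀ a : U, adU a = LinearMap.mulLeft K a - LinearMap.mulRight K a := by
    intro a; ext b; simp [adU, LinearMap.mul_apply', LinearMap.mulRight_apply]
  have hpow : ∀ (a : U) (k : ℕ), (adU a) ^ (p ^ k) = adU (a ^ (p ^ k)) := by
    intro a k
    rw [hadU_eq, hadU_eq,
      sub_pow_char_pow_of_commute p k
        (LinearMap.commute_mulLeft_right a a),
      LinearMap.pow_mulLeft, LinearMap.pow_mulRight]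
  -- action on ι L
  let f : Module.End K L := LieAlgebra.ad K L x
  have hiter : ∀ (k : ℕ) (y : L), ((adU (ι K x)) ^ k) (ι K y) = ι K ((f ^ k) y) := by
    intro k
    induction k with
    | zero => intro y; simp
    | succ k ihk =>
        intro y
        rw [pow_succ', Module.End.mul_apply, ihk, hadU]
        have h1 : (f ^ (k + 1)) y = ⁅x, (f ^ k) y⁆ := by
          rw [pow_succ', Module.End.mul_apply]
          simp [f, LieAlgebra.ad_apply]
        rw [h1]
        have h2 : (ι K : L →ₗ⁅K⁆ U) ⁅x, (f ^ k) y⁆ = ⁅ι K x, ι K ((f ^ k) y)⁆ :=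
          LieHom.map_lie _ _ _
        rw [h2, LieRing.of_associative_ring_bracket]
  -- find a p-polynomial relation for f
  haveI : Module.Finite K (Module.End K L) := Module.Finite.linearMap K K L L
  haveI : IsNoetherian K (Module.End K L) := isNoetherian_of_isNoetherianRing_of_finite K _
  let W : ℕ →o Submodule K (Module.End K L) :=
    ⟨fun n => Submodule.span K (Set.range fun i : Fin n => f ^ (p ^ (i : ℕ))), by
      intro a b hab
      apply Submodule.span_mono
      rintro _ ⟨i, rfl⟩
      exact ⟨⟨(i : ℕ), lt_of_lt_of_le i.2 hab⟩, rfl⟩⟩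
  obtain ⟨N, hN⟩ := monotone_stabilizes_iff_noetherian.mpr inferInstance W
  have hfN : f ^ (p ^ N) ∈ W N := by
    rw [hN (N + 1) (Nat.le_succ N)]
    exact Submodule.subset_span ⟨⟨N, Nat.lt_succ_self N⟩, rfl⟩
  obtain ⟨c, hc⟩ := (Submodule.mem_span_range_iff_exists_fun K).mp hfN
  -- the central element
  set X : U := ι K x with hX
  refine ⟨p ^ N, X ^ (p ^ N) - ∑ i : Fin N, c i • X ^ (p ^ (i : ℕ)),
    Nat.pow_pos (n := N) (by omega), ?_, ?_⟩
  · -- centrality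
    set ιL : L →ₗ[K] U := ((ι K : L →ₗ⁅K⁆ U) : L →ₗ[K] U) with hιL
    have hιL_eq : ∀ y : L, ιL y = ι K y := fun y => rfl
    set Z : U := X ^ (p ^ N) - ∑ i : Fin N, c i • X ^ (p ^ (i : ℕ)) with hZ
    have key : ∀ y : L, Z * ι K y = ι K y * Z := by
      intro y
      have h0 : (adU Z) (ι K y) = 0 := by
        rw [hZ, map_sub, map_sum]
        simp only [map_smul]
        have hrw : ∀ i : Fin N, adU (X ^ p ^ (i : ℕ)) = (adU X) ^ p ^ (i : ℕ) :=
          fun i => (hpow X (i : ℕ)).symm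
        rw [← hpow]
        simp only [LinearMap.sub_apply, LinearMap.sum_apply, LinearMap.smul_apply]
        calc ((adU X) ^ p ^ N) (ι K y)
              - ∑ i : Fin N, c i • (adU (X ^ p ^ (i : ℕ))) (ι K y)
            = ιL ((f ^ p ^ N) y) - ∑ i : Fin N, c i • ιL ((f ^ p ^ (i : ℕ)) y) := by
              rw [hiter]
              congr 1
              refine Finset.sum_congr rfl fun i _ => ?_
              rw [hrw i, hiter]
              rfl
          _ = ιL ((f ^ p ^ N) y - ∑ i : Fin N, c i • ((f ^ p ^ (i : ℕ)) y)) := by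
              rw [map_sub, map_sum]
              simp only [map_smul]
          _ = 0 := by
              have harg : (f ^ p ^ N) y - ∑ i : Fin N, c i • ((f ^ p ^ (i : ℕ)) y) = 0 := by
                have := congrArg (fun g : Module.End K L => g y) hc
                simp only [LinearMap.sum_apply, LinearMap.smul_apply] at this
                rw [← this]
                simp
              rw [harg, map_zero]
      have := hadU Z (ι K y)
      rw [h0] at this
      have := this.symm
      rw [sub_eq_zero] at this
      exact this
    have hsub : Set.range (ι K : L → U) ⊆ (Subalgebra.centralizer K {Z} : Set U) := by
      rintro _ ⟨y, rfl⟩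
      rw [SetLike.mem_coe, Subalgebra.mem_centralizer_iff]
      rintro g hg
      rw [Set.mem_singleton_iff] at hg
      subst hg
      exact key y
    have htop : (⊤ : Subalgebra K U) ≤ Subalgebra.centralizer K {Z} := by
      rw [← adjoin_range_ι_eq_top K L]
      exact Algebra.adjoin_le hsub
    intro u
    have hu : u ∈ Subalgebra.centralizer K {Z} := htop (Algebra.mem_top)
    rw [Subalgebra.mem_centralizer_iff] at hu
    exact hu Z rfl
  · -- span membership
    rw [sub_sub_cancel]
    apply Submodule.sum_mem
    intro i _
    apply Submodule.smul_mem
    apply Submodule.subset_span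
    have hlt : p ^ (i : ℕ) < p ^ N := Nat.pow_lt_pow_right hp1 i.2
    exact ⟨⟨p ^ (i : ℕ), hlt⟩, rfl⟩


end UEAAux

open UEAAux UniversalEnvelopingAlgebra

/-- Over an algebraically closed field of characteristic `p > 0`, every simple module
over the universal enveloping algebra of a finite-dimensional Lie algebra is
finite-dimensional. -/
theorem finiteDimensional_of_isSimpleModule_universalEnvelopingAlgebra
    (K : Type*) [Field K] [IsAlgClosed K] (p : ℕ) [CharP K p] (hp : 0 < p)
    (L : Type*) [LieRing L] [LieAlgebra K L] [Module.Finite K L]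
    (M : Type*) [AddCommGroup M] [Module K M]
    [Module (UniversalEnvelopingAlgebra K L) M]
    [IsScalarTower K (UniversalEnvelopingAlgebra K L) M]
    [IsSimpleModule (UniversalEnvelopingAlgebra K L) M] :
    FiniteDimensional K M := by
  set U := UniversalEnvelopingAlgebra K L with hUdef
  haveI : Fact p.Prime := ⟨(CharP.char_is_prime_or_zero K p).resolve_right (by omega)⟩
  let d := Module.finrank K L
  let B : Module.Basis (Fin d) K L := Module.finBasis K L
  let X : Fin d → U := fun i => ι K (B i)
  choose q ζ hq hcomm hspan using fun i : Fin d => exists_central_pPow K p L (B i)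
  have hspanX : ∀ i, X i ^ q i - ζ i ∈
      Submodule.span K (Set.range fun j : Fin (q i) => X i ^ (j : ℕ)) := fun i => hspan i
  -- the word products
  let P : List (Fin d) → U := fun w => (w.map X).prod
  have Pappend : ∀ u v : List (Fin d), P (u ++ v) = P u * P v := by
    intro u v; simp only [P, List.map_append, List.prod_append]
  have Pcons : ∀ (i : Fin d) (w : List (Fin d)), P (i :: w) = X i * P w := by
    intro i w; simp only [P, List.map_cons, List.prod_cons]
  have Prep : ∀ (n : ℕ) (i : Fin d), P (List.replicate n i) = X i ^ n := by
    intro n i; simp only [P, List.map_replicate, List.prod_replicate]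
  -- the generating sets
  let GoodWords : Set (List (Fin d)) := {w | w.Chain' (· ≤ ·) ∧ ∀ i, w.count i < q i}
  have hGW_fin : GoodWords.Finite := by
    apply Set.Finite.subset (List.finite_length_le (Fin d) (∑ i, (q i - 1)))
    intro w hw
    have hlen := length_eq_sum_count w
    have : ∀ i, w.count i ≤ q i - 1 := fun i => by have h1 := hw.2 i; have h2 := hq i; omega
    simp only [Set.mem_setOf_eq]
    rw [hlen]
    exact Finset.sum_le_sum fun i _ => this i
  let SS : Set U := P '' GoodWords
  have hSS_fin : SS.Finite := hGW_fin.image P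
  let TT : Set U := {t | ∃ c ∈ Submonoid.closure (Set.range ζ), ∃ s ∈ SS, t = c * s}
  let Nspan : Submodule K U := Submodule.span K TT
  have hSS_sub : ∀ s ∈ SS, s ∈ Nspan := fun s hs =>
    Submodule.subset_span ⟨1, one_mem _, s, hs, (one_mul s).symm⟩
  have hζmul : ∀ i : Fin d, ∀ y ∈ Nspan, ζ i * y ∈ Nspan := by
    intro i y hy
    induction hy using Submodule.span_induction with
    | mem t ht =>
        obtain ⟨c, hc, s, hs, rfl⟩ := ht
        exact Submodule.subset_span
          ⟨ζ i * c, mul_mem (Submonoid.subset_closure ⟨i, rfl⟩) hc, s, hs,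
            (mul_assoc _ _ _).symm⟩
    | zero => rw [mul_zero]; exact zero_mem _
    | add a b ha hb iha ihb => rw [mul_add]; exact add_mem iha ihb
    | smul k a ha iha => rw [mul_smul_comm]; exact Submodule.smul_mem _ k iha
  -- the commutator rewriting rule
  have hbr : ∀ a b : Fin d, X a * X b = X b * X a + ∑ k, (B.repr ⁅B a, B b⁆) k • X k := by
    intro a b
    have h2 : (ι K ⁅B a, B b⁆ : U) = X a * X b - X b * X a := by
      rw [LieHom.map_lie, LieRing.of_associative_ring_bracket]
    have h3 : (ι K ⁅B a, B b⁆ : U) = ∑ k, (B.repr ⁅B a, B b⁆) k • X k := by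
      have hsum : (⁅B a, B b⁆ : L) = ∑ k, (B.repr ⁅B a, B b⁆) k • B k := (B.sum_repr _).symm
      calc (ι K ⁅B a, B b⁆ : U)
          = ((ι K : L →ₗ⁅K⁆ U) : L →ₗ[K] U) (∑ k, (B.repr ⁅B a, B b⁆) k • B k) := by
            rw [← hsum]; rfl
        _ = ∑ k, (B.repr ⁅B a, B b⁆) k • X k := by
            rw [map_sum]; simp only [map_smul]; rfl
    rw [← h3, h2]; abel
  -- the main straightening induction
  have main : ∀ n, ∀ w : List (Fin d), w.length ≤ n → P w ∈ Nspan := by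
    intro n
    induction n with
    | zero =>
        intro w hw
        rw [List.eq_nil_of_length_eq_zero (Nat.le_zero.mp hw)]
        exact hSS_sub _ ⟨[], ⟨List.isChain_nil, fun i => by simpa using hq i⟩, rfl⟩
    | succ n ih =>
        have sortedCase : ∀ w : List (Fin d), w.length ≤ n + 1 → w.Chain' (· ≤ ·) →
            P w ∈ Nspan := by
          intro w hw hchain
          by_cases hsmall : ∀ i, w.count i < q i
          · exact hSS_sub _ ⟨w, ⟨hchain, hsmall⟩, rfl⟩
          · push_neg at hsmall
            obtain ⟨i, hi⟩ := hsmall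
            obtain ⟨u, v, rfl⟩ := sorted_extract hchain i hi
            have hlen : u.length + (q i + v.length) ≤ n + 1 := by
              simpa [List.length_append, List.length_replicate] using hw
            have eB : ∀ j : ℕ, P (u ++ List.replicate j i ++ v) = P u * (X i ^ j * P v) := by
              intro j; rw [Pappend, Pappend, Prep, mul_assoc]
            obtain ⟨cW, hcW⟩ := (Submodule.mem_span_range_iff_exists_fun K).mp (hspanX i)
            have hXq : X i ^ q i = ζ i + ∑ j : Fin (q i), cW j • X i ^ (j : ℕ) := by
              rw [hcW]; abel
            have hPw : P (u ++ List.replicate (q i) i ++ v)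
                = ζ i * P (u ++ v)
                  + ∑ j : Fin (q i), cW j • P (u ++ List.replicate (j : ℕ) i ++ v) := by
              simp only [eB]
              rw [hXq, add_mul, mul_add]
              congr 1
              · rw [Pappend, ← mul_assoc, ← hcomm i (P u), mul_assoc]
              · rw [Finset.sum_mul, Finset.mul_sum]
                refine Finset.sum_congr rfl fun j _ => ?_
                rw [smul_mul_assoc, mul_smul_comm]
            rw [hPw]
            apply add_mem
            · refine hζmul i _ (ih (u ++ v) ?_)
              have h2 := hq i
              simp only [List.length_append]
              omega
            · apply Submodule.sum_mem
              intro j _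
              apply Submodule.smul_mem
              apply ih
              have h2 := j.2
              simp only [List.length_append, List.length_replicate]
              omega
        have inner : ∀ k, ∀ w : List (Fin d), w.length ≤ n + 1 → invCount w ≤ k →
            P w ∈ Nspan := by
          intro k
          induction k with
          | zero =>
              intro w hw hinv
              by_cases hchain : w.Chain' (· ≤ ·)
              · exact sortedCase w hw hchain
              · obtain ⟨u, a, b, v, rfl, hba⟩ := exists_desc hchain
                have := invCount_swap u a b v hba
                omega
          | succ k ihk =>
              intro w hw hinv
              by_cases hchain : w.Chain' (· ≤ ·)
              · exact sortedCase w hw hchain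
              · obtain ⟨u, a, b, v, rfl, hba⟩ := exists_desc hchain
                have hswap := invCount_swap u a b v hba
                have eL : P (u ++ a :: b :: v) = P u * ((X a * X b) * P v) := by
                  rw [Pappend, Pcons, Pcons, mul_assoc]
                have eR1 : P (u ++ b :: a :: v) = P u * ((X b * X a) * P v) := by
                  rw [Pappend, Pcons, Pcons, mul_assoc]
                have eR2 : ∀ kk, P (u ++ kk :: v) = P u * (X kk * P v) := by
                  intro kk; rw [Pappend, Pcons]
                have hP : P (u ++ a :: b :: v)
                    = P (u ++ b :: a :: v)
                      + ∑ kk, (B.repr ⁅B a, B b⁆) kk • P (u ++ kk :: v) := by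
                  simp only [eR2]
                  rw [eL, eR1, hbr a b, add_mul, mul_add]
                  congr 1
                  rw [Finset.sum_mul, Finset.mul_sum]
                  refine Finset.sum_congr rfl fun kk _ => ?_
                  rw [smul_mul_assoc, mul_smul_comm]
                rw [hP]
                apply add_mem
                · refine ihk (u ++ b :: a :: v) ?_ (by omega)
                  simp only [List.length_append, List.length_cons] at hw ⊢
                  omega
                · apply Submodule.sum_mem
                  intro kk _
                  apply Submodule.smul_mem
                  apply ih
                  simp only [List.length_append, List.length_cons] at hw ⊢
                  omega
        intro w hw
        exact inner (invCount w) w hw le_rfl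
  have hwords : ∀ w : List (Fin d), P w ∈ Nspan := fun w => main w.length w le_rfl
  -- every product of generators lies in the span of word products
  have hgenprod : ∀ l : List U, (∀ a ∈ l, a ∈ Set.range (ι K : L → U)) →
      l.prod ∈ Submodule.span K (Set.range P) := by
    intro l
    induction l with
    | nil => exact fun _ => Submodule.subset_span ⟨[], rfl⟩
    | cons a t iht =>
        intro hmem
        rw [List.prod_cons]
        have ht := iht fun b hb => hmem b (List.mem_cons_of_mem a hb)
        obtain ⟨y, rfl⟩ := hmem a List.mem_cons_self
        have hmul : ∀ x ∈ Submodule.span K (Set.range P),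
            (ι K y : U) * x ∈ Submodule.span K (Set.range P) := by
          intro x hx
          induction hx using Submodule.span_induction with
          | mem s hs =>
              obtain ⟨w, rfl⟩ := hs
              have hy : (ι K y : U) = ∑ k, (B.repr y) k • X k := by
                have hsum : y = ∑ k, (B.repr y) k • B k := (B.sum_repr _).symm
                calc (ι K y : U)
                    = ((ι K : L →ₗ⁅K⁆ U) : L →ₗ[K] U) (∑ k, (B.repr y) k • B k) := by
                      rw [← hsum]; rfl
                  _ = ∑ k, (B.repr y) k • X k := by
                      rw [map_sum]; simp only [map_smul]; rfl
              rw [hy, Finset.sum_mul]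
              apply Submodule.sum_mem
              intro k _
              rw [smul_mul_assoc]
              apply Submodule.smul_mem
              rw [← Pcons]
              exact Submodule.subset_span ⟨k :: w, rfl⟩
          | zero => rw [mul_zero]; exact zero_mem _
          | add x1 x2 h1 h2 ih1 ih2 => rw [mul_add]; exact add_mem ih1 ih2
          | smul k x hx ihx => rw [mul_smul_comm]; exact Submodule.smul_mem _ k ihx
        exact hmul _ ht
  -- all of U lies in Nspan
  have hU_top : ∀ u : U, u ∈ Nspan := by
    intro u
    have hu : u ∈ Subalgebra.toSubmodule (Algebra.adjoin K (Set.range (ι K : L → U))) := by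
      rw [adjoin_range_ι_eq_top K L]
      exact (Subalgebra.mem_toSubmodule _).mpr (Algebra.mem_top (R := K))
    rw [Algebra.adjoin_eq_span] at hu
    have hle : Submodule.span K ((Submonoid.closure (Set.range (ι K : L → U)) : Set U))
        ≤ Nspan := by
      rw [Submodule.span_le]
      rintro c hc
      obtain ⟨l, hl, rfl⟩ := Submonoid.exists_list_of_mem_closure hc
      have h1 := hgenprod l hl
      have h2 : Submodule.span K (Set.range P) ≤ Nspan :=
        Submodule.span_le.mpr (by rintro _ ⟨w, rfl⟩; exact hwords w)
      exact h2 h1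
    exact hle hu
  -- set up the polynomial ring action on M
  let R := MvPolynomial (Fin d) K
  let Z₀ : Subalgebra K U := Algebra.adjoin K (Set.range ζ)
  have hcommS : ∀ a ∈ Set.range ζ, ∀ b ∈ Set.range ζ, a * b = b * a := by
    rintro a ha b ⟨i, rfl⟩
    exact (hcomm i a).symm
  letI : CommRing Z₀ := Algebra.adjoinCommRingOfComm K hcommS
  let ζ' : Fin d → Z₀ := fun i => ⟨ζ i, Algebra.subset_adjoin ⟨i, rfl⟩⟩
  let φ : R →ₐ[K] U := Z₀.val.comp (MvPolynomial.aeval ζ')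
  have hφX : ∀ i, φ (MvPolynomial.X i) = ζ i := by
    intro i
    show Z₀.val ((MvPolynomial.aeval ζ') (MvPolynomial.X i)) = ζ i
    rw [MvPolynomial.aeval_X]
    rfl
  have hφC : ∀ a : K, φ (MvPolynomial.C a) = algebraMap K U a := by
    intro a
    show Z₀.val ((MvPolynomial.aeval ζ') (MvPolynomial.C a)) = algebraMap K U a
    rw [MvPolynomial.aeval_C]
    exact Z₀.val.commutes a
  letI modRM : Module R M := Module.compHom M (φ.toRingHom : R →+* U)
  have hRsmul : ∀ (r : R) (m : M), r • m = φ r • m := fun r m => rfl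
  have hφcent : ∀ (r : R) (v : U), φ r * v = v * φ r := by
    intro r
    induction r using MvPolynomial.induction_on with
    | C a => intro v; rw [hφC]; exact (Algebra.commutes a v)
    | add r1 r2 ih1 ih2 => intro v; rw [map_add, add_mul, mul_add, ih1, ih2]
    | mul_X r i ih =>
        intro v
        rw [map_mul, hφX, mul_assoc, hcomm i v, ← mul_assoc, ih v, mul_assoc]
  haveI : IsScalarTower K R M := ⟨fun k r m => by
    rw [hRsmul, hRsmul, map_smul, Algebra.smul_def, mul_smul, algebraMap_smul]⟩
  -- a cyclic generator
  haveI : Nontrivial M := IsSimpleModule.nontrivial U M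
  obtain ⟨m₀, hm₀⟩ := exists_ne (0 : M)
  have hcyc : Submodule.span U {m₀} = ⊤ := by
    rcases eq_bot_or_eq_top (Submodule.span U {m₀}) with h | h
    · exfalso
      have := Submodule.mem_span_singleton_self (R := U) m₀
      rw [h] at this
      exact hm₀ ((Submodule.mem_bot U).mp this)
    · exact h
  have hall : ∀ m : M, ∃ u : U, u • m₀ = m := by
    intro m
    have : m ∈ Submodule.span U {m₀} := by rw [hcyc]; trivial
    exact Submodule.mem_span_singleton.mp this
  let gens : Set M := (fun s => s • m₀) '' SS
  have hgens_fin : gens.Finite := hSS_fin.image _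
  let NM : Submodule R M := Submodule.span R gens
  have hζsmulM : ∀ c ∈ Submonoid.closure (Set.range ζ), ∀ m ∈ NM, c • m ∈ NM := by
    intro c hc
    induction hc using Submonoid.closure_induction with
    | mem c hc =>
        obtain ⟨i, rfl⟩ := hc
        intro m hm
        have heq : ζ i • m = (MvPolynomial.X i : R) • m := by
          rw [hRsmul, hφX]
        rw [heq]
        exact Submodule.smul_mem _ _ hm
    | one => intro m hm; rw [one_smul]; exact hm
    | mul c1 c2 hc1 hc2 ih1 ih2 => intro m hm; rw [mul_smul]; exact ih1 _ (ih2 _ hm)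
  have hNM_top : ∀ m : M, m ∈ NM := by
    intro m
    obtain ⟨u, rfl⟩ := hall m
    have hu := hU_top u
    induction hu using Submodule.span_induction with
    | mem t ht =>
        obtain ⟨c, hc, s, hs, rfl⟩ := ht
        rw [mul_smul]
        exact hζsmulM c hc _ (Submodule.subset_span ⟨s, hs, rfl⟩)
    | zero => rw [zero_smul]; exact zero_mem _
    | add u1 u2 h1 h2 ih1 ih2 => rw [add_smul]; exact add_mem ih1 ih2
    | smul k u hu ihu =>
        rw [smul_assoc]
        exact Submodule.smul_of_tower_mem _ k ihu
  -- M is finitely generated over R, take a maximal submodule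
  have hfg : (⊤ : Submodule R M).FG :=
    ⟨hgens_fin.toFinset, by
      rw [Set.Finite.coe_toFinset]
      exact le_antisymm le_top (fun m _ => hNM_top m)⟩
  haveI : IsCoatomic (Submodule R M) :=
    CompleteLattice.coatomic_of_top_compact ((Submodule.fg_iff_compact _).mp hfg)
  rcases eq_top_or_exists_le_coatom (⊥ : Submodule R M) with h | ⟨Nc, hNc, -⟩
  · exfalso
    have : m₀ ∈ (⊥ : Submodule R M) := by rw [h]; trivial
    exact hm₀ ((Submodule.mem_bot R).mp this)
  haveI : IsSimpleModule R (M ⧸ Nc) := isSimpleModule_iff_isCoatom.mpr hNc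
  set mI : Ideal R := Module.annihilator R (M ⧸ Nc) with hmI
  haveI hmax : mI.IsMaximal := IsSimpleModule.annihilator_isMaximal
  have hannN : ∀ r ∈ mI, ∀ m : M, r • m ∈ Nc := by
    intro r hr m
    have h1 := Module.mem_annihilator.mp hr (Submodule.Quotient.mk m)
    rw [← Submodule.Quotient.mk_smul] at h1
    exact (Submodule.Quotient.mk_eq_zero _).mp h1
  set WR : Submodule R M := mI • (⊤ : Submodule R M) with hWR
  have hWR_le : WR ≤ Nc := Submodule.smul_le.mpr fun r hr n _ => hannN r hr n
  have hWR_stable : ∀ (u : U) (m : M), m ∈ WR → u • m ∈ WR := by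
    intro u m hm
    refine Submodule.smul_induction_on hm ?_ ?_
    · intro r hr n hn
      have : u • (r • n) = r • (u • n) := by
        rw [hRsmul, hRsmul, ← mul_smul, ← mul_smul, hφcent r u]
      rw [this]
      exact Submodule.smul_mem_smul hr trivial
    · intro x y hx hy
      rw [smul_add]
      exact add_mem hx hy
  let WU : Submodule U M :=
    { carrier := WR
      add_mem' := fun hx hy => add_mem hx hy
      zero_mem' := zero_mem _
      smul_mem' := fun u m hm => hWR_stable u m hm }
  have hWU_bot : WU = ⊥ := by
    rcases eq_bot_or_eq_top WU with h | h
    · exact h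
    · exfalso
      have : WR = ⊤ := by
        rw [eq_top_iff]
        intro m _
        have : m ∈ WU := by rw [h]; trivial
        exact this
      exact hNc.1 (le_antisymm le_top (this ▸ hWR_le))
  have hann : ∀ r ∈ mI, ∀ m : M, r • m = 0 := by
    intro r hr m
    have h1 : r • m ∈ WR := Submodule.smul_mem_smul hr trivial
    have h2 : r • m ∈ WU := h1
    rw [hWU_bot] at h2
    exact (Submodule.mem_bot U).mp h2
  obtain ⟨pt, hpt⟩ := (MvPolynomial.isMaximal_iff_eq_vanishingIdeal_singleton (I := mI)).mp hmax
  have hscal : ∀ (r : R) (m : M), r • m = (MvPolynomial.eval pt r) • m := by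
    intro r m
    have hmem : r - MvPolynomial.C (MvPolynomial.eval pt r) ∈ mI := by
      rw [hpt, MvPolynomial.mem_vanishingIdeal_singleton_iff]
      simp
    have h0 := hann _ hmem m
    rw [sub_smul, sub_eq_zero] at h0
    rw [h0, ← MvPolynomial.algebraMap_eq, algebraMap_smul]
  have hKspan : ∀ m : M, m ∈ Submodule.span K gens := by
    intro m
    have hm := hNM_top m
    induction hm using Submodule.span_induction with
    | mem x hx => exact Submodule.subset_span hx
    | zero => exact zero_mem _
    | add x y hx hy ihx ihy => exact add_mem ihx ihy
    | smul r x hx ihx =>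
        rw [hscal]
        exact Submodule.smul_mem _ _ ihx
  haveI : Module.Finite K M :=
    ⟨⟨hgens_fin.toFinset, by
      rw [Set.Finite.coe_toFinset]
      exact le_antisymm le_top (fun m _ => hKspan m)⟩⟩
  exact this
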